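/- Let M be a matroid on a finite ground set E, let ω ∈ ℝ^E, let B be an ω-minimum basis of M, let e ∈ E \ B, and let C_0 be the fundamental circuit of B and e. Then for every circuit C of M containing e, max_{f ∈ C \ {e}} ω_f ≥ max_{f ∈ C_0 \ {e}} ω_f; consequently min over circuits C containing e of max_{f ∈ C \ {e}} ω_f equals max_{f ∈ C_0 \ {e}} ω_f. -/

import Mathlib

open scoped Classical

variable {α : Type*}

/-- The ω-weight of a set of elements: the sum of ω over the set. -/
noncomputable def wSum (ω : α → ℝ) (B : Set α) : ℝ := ∑ᶠ e ∈ B, ω e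

/-- `B` is an ω-minimum basis of `M`: a basis whose ω-weight is minimum among all bases. -/
def IsMinBase [Fintype α] (M : Matroid α) (ω : α → ℝ) (B : Set α) : Prop :=
  M.IsBase B ∧ ∀ B' : Set α, M.IsBase B' → wSum ω B ≤ wSum ω B'

/-- `ω` lies in the Bergman fan of `M`: every element lies in some ω-minimum basis. -/
def InBergmanFan [Fintype α] (M : Matroid α) (ω : α → ℝ) : Prop :=
  ∀ e : α, ∃ B : Set α, IsMinBase M ω B ∧ e ∈ B

/-- `C` is a circuit of `M`: a minimal dependent set. -/
def IsCircuit (M : Matroid α) (C : Set α) : Prop := Minimal M.Dep C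

/-- A cocircuit of `M` is a circuit of the dual matroid `M✶`. -/
def IsCocircuit (M : Matroid α) (C : Set α) : Prop := IsCircuit M✶ C

private lemma wSum_insert' (ω : α → ℝ) (S : Set α) {g : α} (hg : g ∉ S) [Fintype α] :
    wSum ω (insert g S) = ω g + wSum ω S :=
  finsum_mem_insert ω hg S.toFinite

private lemma circuit_indep_diff {M : Matroid α} {C : Set α} (hC : IsCircuit M C) {f : α}
    (hf : f ∈ C) : M.Indep (C \ {f}) := by
  rw [← Matroid.not_dep_iff (Set.diff_subset.trans hC.1.2)]
  intro hdep
  exact (hC.2 hdep Set.diff_subset hf).2 rfl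

private lemma circuit_mem_closure {M : Matroid α} {C : Set α} (hC : IsCircuit M C) {f : α}
    (hf : f ∈ C) : f ∈ M.closure (C \ {f}) := by
  rw [(circuit_indep_diff hC hf).mem_closure_iff]
  left
  rw [Set.insert_diff_singleton, Set.insert_eq_of_mem hf]
  exact hC.1

/-- For a matroid M, ω ∈ ℝ^E, an ω-minimum basis B, an element e ∉ B,
and the fundamental circuit C₀ of B and e: every circuit C containing e satisfies
max_{f ∈ C \ {e}} ω_f ≥ max_{f ∈ C₀ \ {e}} ω_f; consequently the minimum over circuits C
containing e of max_{f ∈ C \ {e}} ω_f equals max_{f ∈ C₀ \ {e}} ω_f. -/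
theorem stmt9 [Fintype α] (M : Matroid α) (hE : M.E = Set.univ) (ω : α → ℝ)
    (B : Set α) (hB : IsMinBase M ω B) (e : α) (he : e ∉ B)
    (C₀ : Set α) (hC₀ : IsCircuit M C₀) (heC₀ : e ∈ C₀) (hC₀B : C₀ ⊆ insert e B) :
    (∀ C : Set α, IsCircuit M C → e ∈ C →
        sSup (ω '' (C₀ \ {e})) ≤ sSup (ω '' (C \ {e}))) ∧
      sInf {r : ℝ | ∃ C : Set α, IsCircuit M C ∧ e ∈ C ∧ r = sSup (ω '' (C \ {e}))} =
        sSup (ω '' (C₀ \ {e})) := by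
  obtain ⟨hBbase, hBmin⟩ := hB
  have key : ∀ C : Set α, IsCircuit M C → e ∈ C →
      sSup (ω '' (C₀ \ {e})) ≤ sSup (ω '' (C \ {e})) := by
    intro C hC heC
    by_cases hne : (C₀ \ {e}).Nonempty
    · have himg : (ω '' (C₀ \ {e})).Nonempty := hne.image ω
      obtain ⟨f, hfC₀, hfω⟩ := himg.csSup_mem ((C₀ \ {e}).toFinite.image ω)
      by_cases hfCe : f ∈ C \ {e}
      · rw [← hfω]
        exact le_csSup ((C \ {e}).toFinite.image ω).bddAbove (Set.mem_image_of_mem ω hfCe)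
      · have hfB : f ∈ B := by
          rcases hC₀B hfC₀.1 with h | h
          · exact absurd h hfC₀.2
          · exact h
        set X := (B \ {f}) ∪ (C \ {e}) with hX
        have hXE : X ⊆ M.E := by rw [hE]; exact Set.subset_univ _
        have heX : e ∈ M.closure X :=
          M.closure_subset_closure Set.subset_union_right (circuit_mem_closure hC heC)
        have hC₀sub : C₀ \ {f} ⊆ M.closure X := by
          intro x hx
          rcases eq_or_ne x e with rfl | hxe
          · exact heX
          · have hxB : x ∈ B := by
              rcases hC₀B hx.1 with h | h
              · exact absurd h hxe
              · exact h
            exact M.subset_closure X hXE (Or.inl ⟨hxB, hx.2⟩)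
        have hfcl : f ∈ M.closure X :=
          M.closure_subset_closure_of_subset_closure hC₀sub (circuit_mem_closure hC₀ hfC₀.1)
        have hBcl : B ⊆ M.closure X := by
          intro x hx
          rcases eq_or_ne x f with rfl | hxf
          · exact hfcl
          · exact M.subset_closure X hXE (Or.inl ⟨hx, hxf⟩)
        have hXspan : M.Spanning X := by
          rw [Matroid.spanning_iff_closure_eq hXE]
          refine (M.closure_subset_ground X).antisymm ?_
          rw [← hBbase.spanning.closure_eq]
          exact M.closure_subset_closure_of_subset_closure hBcl
        obtain ⟨B'', hB''base, hB''X⟩ := hXspan.exists_isBase_subset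
        have hfB'' : f ∉ B'' := fun h => by
          rcases hB''X h with h' | h'
          · exact h'.2 rfl
          · exact hfCe h'
        obtain ⟨g, hg, hBg⟩ := hBbase.exchange hB''base ⟨hfB, hfB''⟩
        have hgC : g ∈ C \ {e} := by
          rcases hB''X hg.1 with h' | h'
          · exact absurd h'.1 hg.2
          · exact h'
        have hgB : g ∉ B \ {f} := fun h => hg.2 h.1
        have hwle := hBmin _ hBg
        have h1 : wSum ω (insert g (B \ {f})) = ω g + wSum ω (B \ {f}) := wSum_insert' ω _ hgB
        have hBins : insert f (B \ {f}) = B := by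
          rw [Set.insert_diff_singleton, Set.insert_eq_of_mem hfB]
        have h2 : wSum ω B = ω f + wSum ω (B \ {f}) := by
          conv_lhs => rw [← hBins]
          exact wSum_insert' ω _ (fun h => h.2 rfl)
        have hfg : ω f ≤ ω g := by linarith [hwle, h1, h2]
        calc sSup (ω '' (C₀ \ {e})) = ω f := hfω.symm
          _ ≤ ω g := hfg
          _ ≤ sSup (ω '' (C \ {e})) :=
            le_csSup ((C \ {e}).toFinite.image ω).bddAbove (Set.mem_image_of_mem ω hgC)
    · have hC₀e : C₀ = {e} := by
        refine Set.eq_singleton_iff_unique_mem.mpr ⟨heC₀, fun x hx => ?_⟩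
        by_contra hxe
        exact hne ⟨x, hx, hxe⟩
      have hsub : C₀ ⊆ C := by rw [hC₀e]; exact Set.singleton_subset_iff.mpr heC
      have : C = C₀ := (hC.2 hC₀.1 hsub).antisymm hsub
      rw [this]
  refine ⟨key, ?_⟩
  have hmem : sSup (ω '' (C₀ \ {e})) ∈
      {r : ℝ | ∃ C : Set α, IsCircuit M C ∧ e ∈ C ∧ r = sSup (ω '' (C \ {e}))} :=
    ⟨C₀, hC₀, heC₀, rfl⟩
  have hlb : ∀ r ∈ {r : ℝ | ∃ C : Set α, IsCircuit M C ∧ e ∈ C ∧ r = sSup (ω '' (C \ {e}))},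
      sSup (ω '' (C₀ \ {e})) ≤ r := by
    rintro r ⟨C, hC, heC, rfl⟩
    exact key C hC heC
  exact le_antisymm (csInf_le ⟨_, hlb⟩ hmem) (le_csInf ⟨_, hmem⟩ hlb)
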